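/- Let n be an even positive integer and let G be a connected graph without a matching of size n/2. Let V(G) = S ∪ Q ∪ I be any partition of the vertex set satisfying: (1) |Q| + 2|S| = min{v(G), n − 1}; (2) I is an independent set, and if v(G) ≤ n − 1 then I = ∅; (3) every vertex in Q has at most one neighbor in I; (4) every vertex in I has degree less than n/2. Define f(v) = (n−1)/4 for v ∈ S, f(v) = (n−1)/2 − deg(v)/2 for v ∈ Q, and f(v) = 0 for v ∈ I. Then Σ_{v ∈ V(G)} f(v) ≤ ((n−1)/2)·v(G) − e(G). -/

import Mathlib

/-- A matching of size `m` in `G`: a set of `m` pairwise disjoint edges of `G`. -/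
def HasMatching {V : Type*} (G : SimpleGraph V) (m : ℕ) : Prop :=
  ∃ M : Finset (Sym2 V), M.card = m ∧ (∀ e ∈ M, e ∈ G.edgeSet) ∧
    (∀ e ∈ M, ∀ f ∈ M, e ≠ f → ∀ v : V, v ∈ e → v ∉ f)

open scoped Classical in
theorem stmt8 (n : ℕ) (hn : Even n) (hn0 : 0 < n)
    (V : Type*) [Fintype V] (G : SimpleGraph V) (hconn : G.Connected)
    (hnm : ¬ HasMatching G (n / 2))
    (S Q I : Set V)
    (hpart : S ∪ Q ∪ I = Set.univ)
    (hSQ : Disjoint S Q) (hSI : Disjoint S I) (hQI : Disjoint Q I)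
    (h1 : Q.ncard + 2 * S.ncard = min (Fintype.card V) (n - 1))
    (h2 : ∀ u ∈ I, ∀ v ∈ I, ¬ G.Adj u v)
    (h2' : Fintype.card V ≤ n - 1 → I = ∅)
    (h3 : ∀ q ∈ Q, ∀ v₁ ∈ I, ∀ v₂ ∈ I, G.Adj q v₁ → G.Adj q v₂ → v₁ = v₂)
    (h4 : ∀ v ∈ I, (G.neighborSet v).ncard < n / 2) :
    ∑ v : V, (if v ∈ S then ((n : ℝ) - 1) / 4
      else if v ∈ Q then ((n : ℝ) - 1) / 2 - ((G.neighborSet v).ncard : ℝ) / 2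
      else 0)
    ≤ ((n : ℝ) - 1) / 2 * (Fintype.card V : ℝ) - (G.edgeSet.ncard : ℝ) := by
  have hn2 : 2 ≤ n := by obtain ⟨k, hk⟩ := hn; omega
  have hdeg : ∀ v : V, (G.neighborSet v).ncard = G.degree v := by
    intro v
    rw [Set.ncard_eq_toFinset_card', Set.toFinset_card,
      SimpleGraph.card_neighborSet_eq_degree]
  -- handshake
  have hE : (G.edgeSet.ncard : ℝ) * 2 = ∑ v : V, (G.degree v : ℝ) := by
    have h := G.sum_degrees_eq_twice_card_edges
    have : G.edgeSet.ncard = G.edgeFinset.card := by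
      rw [Set.ncard_eq_toFinset_card']
      congr 1
    rw [this]
    have h2 : G.edgeFinset.card * 2 = ∑ v : V, G.degree v := by omega
    exact_mod_cast h2
  -- rewrite RHS as a sum
  have hRHS : ((n : ℝ) - 1) / 2 * (Fintype.card V : ℝ) - (G.edgeSet.ncard : ℝ)
      = ∑ v : V, (((n : ℝ) - 1) / 2 - (G.degree v : ℝ) / 2) := by
    rw [Finset.sum_sub_distrib, Finset.sum_const, ← Finset.sum_div, ← hE]
    simp [Finset.card_univ]
    ring
  rw [hRHS]
  rw [← sub_nonneg, ← Finset.sum_sub_distrib]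
  -- partition into finsets
  set Sf := S.toFinset with hSfdef
  set Qf := Q.toFinset with hQfdef
  set If := I.toFinset with hIfdef
  have hUnion : Sf ∪ Qf ∪ If = Finset.univ := by
    ext v
    have := Set.ext_iff.mp hpart v
    simp only [Set.mem_union, Set.mem_univ, iff_true] at this
    simp [hSfdef, hQfdef, hIfdef]
    tauto
  have hdSQ : Disjoint Sf Qf := by simpa [hSfdef, hQfdef, Set.disjoint_toFinset] using hSQ
  have hdSI : Disjoint Sf If := by simpa [hSfdef, hIfdef, Set.disjoint_toFinset] using hSI
  have hdQI : Disjoint Qf If := by simpa [hQfdef, hIfdef, Set.disjoint_toFinset] using hQI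
  have hdSQI : Disjoint (Sf ∪ Qf) If := Finset.disjoint_union_left.mpr ⟨hdSI, hdQI⟩
  set F : V → ℝ := fun v => (((n : ℝ) - 1) / 2 - (G.degree v : ℝ) / 2) -
      (if v ∈ S then ((n : ℝ) - 1) / 4
      else if v ∈ Q then ((n : ℝ) - 1) / 2 - ((G.neighborSet v).ncard : ℝ) / 2
      else 0) with hFdef
  show 0 ≤ ∑ v : V, F v
  have hsplit : ∑ v : V, F v = ∑ v ∈ Sf, F v + ∑ v ∈ Qf, F v + ∑ v ∈ If, F v := by
    rw [← Finset.sum_union hdSQ, ← Finset.sum_union hdSQI, hUnion]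
  rw [hsplit]
  -- Q terms vanish
  have hQ0 : ∑ v ∈ Qf, F v = 0 := by
    apply Finset.sum_eq_zero
    intro v hv
    have hvQ : v ∈ Q := by rwa [hQfdef, Set.mem_toFinset] at hv
    have hvS : v ∉ S := fun hvS => (hSQ.ne_of_mem hvS hvQ) rfl
    simp [hFdef, hvQ, hvS, hdeg v]
  rw [hQ0, add_zero]
  -- cardinalities
  have hcards : Sf.card + Qf.card + If.card = Fintype.card V := by
    rw [← Finset.card_union_of_disjoint hdSQ, ← Finset.card_union_of_disjoint hdSQI,
      hUnion, Finset.card_univ]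
  have hSc : S.ncard = Sf.card := Set.ncard_eq_toFinset_card' S
  have hQc : Q.ncard = Qf.card := Set.ncard_eq_toFinset_card' Q
  have hIc : I.ncard = If.card := Set.ncard_eq_toFinset_card' I
  -- bound S terms
  have hSbound : ∀ v ∈ Sf, ((n : ℝ) - 1) / 4 - ((Fintype.card V : ℝ) - 1) / 2 ≤ F v := by
    intro v hv
    have hvS : v ∈ S := by rwa [hSfdef, Set.mem_toFinset] at hv
    have hd : G.degree v < Fintype.card V := G.degree_lt_card_verts v
    have : (G.degree v : ℝ) ≤ (Fintype.card V : ℝ) - 1 := by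
      have h' : G.degree v + 1 ≤ Fintype.card V := hd
      have := (Nat.cast_le (α := ℝ)).mpr h'
      push_cast at this; linarith
    simp only [hFdef, if_pos hvS]
    linarith
  have hIbound : ∀ v ∈ If, (n : ℝ) / 4 ≤ F v := by
    intro v hv
    have hvI : v ∈ I := by rwa [hIfdef, Set.mem_toFinset] at hv
    have hvS : v ∉ S := fun hvS => (hSI.ne_of_mem hvS hvI) rfl
    have hvQ : v ∉ Q := fun hvQ => (hQI.ne_of_mem hvQ hvI) rfl
    have hd : (G.neighborSet v).ncard < n / 2 := h4 v hvI
    have hd' : 2 * G.degree v ≤ n - 2 := by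
      rw [← hdeg v]; omega
    have hdR : 2 * (G.degree v : ℝ) ≤ (n : ℝ) - 2 := by
      have := (Nat.cast_le (α := ℝ)).mpr hd'
      push_cast at this
      rw [Nat.cast_sub hn2] at this <;> push_cast at this ⊢ <;> linarith
    simp only [hFdef, if_neg hvS, if_neg hvQ]
    linarith
  have hSsum : (Sf.card : ℝ) * (((n : ℝ) - 1) / 4 - ((Fintype.card V : ℝ) - 1) / 2)
      ≤ ∑ v ∈ Sf, F v := by
    have := Finset.card_nsmul_le_sum Sf F _ hSbound
    simpa [nsmul_eq_mul] using this
  have hIsum : (If.card : ℝ) * ((n : ℝ) / 4) ≤ ∑ v ∈ If, F v := by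
    have := Finset.card_nsmul_le_sum If F _ hIbound
    simpa [nsmul_eq_mul] using this
  -- case split
  by_cases hcase : Fintype.card V ≤ n - 1
  · -- I empty and S empty
    have hIe : I = ∅ := h2' hcase
    have hmin : min (Fintype.card V) (n - 1) = Fintype.card V := min_eq_left hcase
    have hIfe : If.card = 0 := by simp [hIfdef, hIe]
    have hS0 : Sf.card = 0 := by
      rw [hmin] at h1
      omega
    have hSfe : Sf = ∅ := Finset.card_eq_zero.mp hS0
    have hIfe' : If = ∅ := Finset.card_eq_zero.mp hIfe
    simp [hSfe, hIfe']
  · push_neg at hcase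
    have hmn : n ≤ Fintype.card V := by omega
    have hmin : min (Fintype.card V) (n - 1) = n - 1 := min_eq_right (by omega)
    rw [hmin] at h1
    -- nat facts
    have h2s : 2 * Sf.card ≤ n - 1 := by omega
    have hIcard : If.card = Fintype.card V - n + 1 + Sf.card := by omega
    -- move to reals
    have hMn : (n : ℝ) ≤ (Fintype.card V : ℝ) := by exact_mod_cast hmn
    have h2sR : 2 * (Sf.card : ℝ) + 1 ≤ (n : ℝ) := by
      have : 2 * Sf.card + 1 ≤ n := by omega
      exact_mod_cast this
    have hiR : (If.card : ℝ) = (Fintype.card V : ℝ) - (n : ℝ) + 1 + (Sf.card : ℝ) := by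
      have h' : If.card + n = Fintype.card V + 1 + Sf.card := by omega
      have := (Nat.cast_inj (R := ℝ)).mpr h'
      push_cast at this
      linarith
    have hs0 : (0:ℝ) ≤ (Sf.card : ℝ) := Nat.cast_nonneg _
    set s := (Sf.card : ℝ)
    set i := (If.card : ℝ)
    set M := (Fintype.card V : ℝ)
    have key : 0 ≤ s * (((n : ℝ) - 1) / 4 - (M - 1) / 2) + i * ((n : ℝ) / 4) := by
      rw [hiR]
      nlinarith [mul_nonneg (by linarith : (0:ℝ) ≤ (n:ℝ) - 1 - 2 * s) (by linarith : (0:ℝ) ≤ M - (n:ℝ))]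
    calc (0:ℝ) ≤ s * (((n : ℝ) - 1) / 4 - (M - 1) / 2) + i * ((n : ℝ) / 4) := key
      _ ≤ ∑ v ∈ Sf, F v + ∑ v ∈ If, F v := add_le_add hSsum hIsum
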